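/- The bracket defined on basis vectors e_i (i ≥ 1) by [e_1, e_i] = e_{i+1} for i ≥ 2 and [e_2, e_j] = e_{j+2} for j ≥ 3 (all other brackets of basis vectors with smaller index against larger index being zero), extended antisymmetrically and bilinearly, satisfies the Jacobi identity, defining the Lie algebra 𝔪₂. -/

import Mathlib

/-- Structure constants of 𝔪₂: basis vectors are `e i = Finsupp.single i 1` for `i ≥ 1`
(index 0 unused). `[e 1, e i] = e (i+1)` for `i ≥ 2`, `[e 2, e j] = e (j+2)` for `j ≥ 3`,
all other brackets of basis vectors with smaller index against larger index are zero,
extended antisymmetrically. -/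
noncomputable def m2c (K : Type*) [Field K] (i j : ℕ) : ℕ →₀ K :=
  if i = 1 ∧ 2 ≤ j then Finsupp.single (j + 1) 1
  else if j = 1 ∧ 2 ≤ i then -Finsupp.single (i + 1) 1
  else if i = 2 ∧ 3 ≤ j then Finsupp.single (j + 2) 1
  else if j = 2 ∧ 3 ≤ i then -Finsupp.single (i + 2) 1
  else 0

/-- The bilinear extension of the bracket given by structure constants `c`. -/
noncomputable def brkt (K : Type*) [Field K] (c : ℕ → ℕ → (ℕ →₀ K)) (x y : ℕ →₀ K) :
    ℕ →₀ K :=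
  x.sum fun i a => y.sum fun j b => (a * b) • c i j

/-- The bracket as a bilinear map. -/
noncomputable def brktL (K : Type*) [Field K] (c : ℕ → ℕ → (ℕ →₀ K)) :
    (ℕ →₀ K) →ₗ[K] (ℕ →₀ K) →ₗ[K] (ℕ →₀ K) :=
  Finsupp.lsum K fun i => LinearMap.toSpanSingleton K _
    (Finsupp.lsum K fun j => LinearMap.toSpanSingleton K _ (c i j))

lemma brkt_eq (K : Type*) [Field K] (c : ℕ → ℕ → (ℕ →₀ K)) (x y : ℕ →₀ K) :
    brkt K c x y = brktL K c x y := by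
  simp [brkt, brktL, Finsupp.lsum_apply, LinearMap.toSpanSingleton_apply,
    Finsupp.sum, Finsupp.smul_sum, mul_smul, Finset.sum_apply', LinearMap.smul_apply,
    Finset.smul_sum]

lemma brktL_single (K : Type*) [Field K] (c : ℕ → ℕ → (ℕ →₀ K)) (i j : ℕ) (a b : K) :
    brktL K c (Finsupp.single i a) (Finsupp.single j b) = (a * b) • c i j := by
  simp [brktL, LinearMap.toSpanSingleton_apply, mul_smul]

lemma m2c_antisymm (K : Type*) [Field K] (i j : ℕ) : m2c K i j + m2c K j i = 0 := by
  unfold m2c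
  split_ifs <;> first | (exfalso; omega) | abel

set_option maxHeartbeats 2000000 in
lemma jacobi_key (K : Type*) [Field K] (i j k : ℕ) :
    brktL K (m2c K) (m2c K i j) (Finsupp.single k 1) +
      brktL K (m2c K) (m2c K j k) (Finsupp.single i 1) +
      brktL K (m2c K) (m2c K k i) (Finsupp.single j 1) = 0 := by
  rcases i with (_|_|_|i) <;> rcases j with (_|_|_|j) <;> rcases k with (_|_|_|k) <;>
    simp +arith [m2c, brktL_single]

/-- The bracket of 𝔪₂ is antisymmetric and satisfies the Jacobi identity, defining
the Lie algebra 𝔪₂. -/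
theorem m2_is_lie_algebra (K : Type*) [Field K] :
    (∀ x y : ℕ →₀ K, brkt K (m2c K) x y = - brkt K (m2c K) y x) ∧
    (∀ x y z : ℕ →₀ K,
      brkt K (m2c K) (brkt K (m2c K) x y) z + brkt K (m2c K) (brkt K (m2c K) y z) x +
        brkt K (m2c K) (brkt K (m2c K) z x) y = 0) := by
  set B := brktL K (m2c K) with hB
  constructor
  · have anti : ∀ x y : ℕ →₀ K, B x y + B y x = 0 := by
      intro x y
      induction x using Finsupp.induction_linear with
      | zero => simp
      | add f g hf hg =>
          simp only [map_add, LinearMap.add_apply]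
          linear_combination (norm := abel) hf + hg
      | single m a =>
          induction y using Finsupp.induction_linear with
          | zero => simp
          | add f g hf hg =>
              simp only [map_add, LinearMap.add_apply]
              linear_combination (norm := abel) hf + hg
          | single n b =>
              rw [brktL_single, brktL_single, mul_comm b a, ← smul_add, m2c_antisymm,
                smul_zero]
    intro x y
    rw [brkt_eq, brkt_eq]
    exact eq_neg_of_add_eq_zero_left (anti x y)
  · have jac : ∀ x y z : ℕ →₀ K, B (B x y) z + B (B y z) x + B (B z x) y = 0 := by
      intro x y z
      induction x using Finsupp.induction_linear with
      | zero => simp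
      | add f g hf hg =>
          simp only [map_add, LinearMap.add_apply]
          linear_combination (norm := abel) hf + hg
      | single i a =>
        induction y using Finsupp.induction_linear with
        | zero => simp
        | add f g hf hg =>
            simp only [map_add, LinearMap.add_apply]
            linear_combination (norm := abel) hf + hg
        | single j b =>
          induction z using Finsupp.induction_linear with
          | zero => simp
          | add f g hf hg =>
              simp only [map_add, LinearMap.add_apply]
              linear_combination (norm := abel) hf + hg
          | single k c =>
              have e1 : ∀ (m : ℕ) (t : K), Finsupp.single m t = t • Finsupp.single m (1:K) :=
                fun m t => by simp
              rw [e1 i a, e1 j b, e1 k c]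
              simp only [map_smul, LinearMap.smul_apply, hB, brktL_single, one_mul, one_smul,
                smul_smul]
              rw [show c * (b * a) = a * (c * b) by ring, show b * (a * c) = a * (c * b) by ring,
                ← smul_add, ← smul_add, jacobi_key, smul_zero]
    intro x y z
    simp only [brkt_eq, ← hB]
    exact jac x y z
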